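/- arXiv:2307.03442 — 2 statements merged into one kernel-verified Lean document; each statement's English description precedes it below -/
import Mathlib

section
/- Let G(2,5) ⊂ ℙ(Λ²ℂ⁵) = ℙ⁹ be the Grassmannian of 2-planes in ℂ⁵ under the Plücker embedding (the locus of decomposable bivectors). Let ℓ = {[e₁∧(t e₂ + s e₃)] : [t:s] ∈ ℙ¹} and let b ∈ G(2,5) be a point not lying on any line of G(2,5) that meets ℓ. Then the linear span of {b} ∪ ℓ in ℙ⁹ intersects G(2,5) exactly in {b} ∪ ℓ. -/
noncomputable section

abbrev V5 : Type := Fin 5 → ℂ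

/-- The exterior algebra of `ℂ⁵`; bivectors `Λ²ℂ⁵` live inside it. -/
abbrev ΛV : Type := ExteriorAlgebra ℂ V5

/-- The standard basis `e₁, …, e₅` of `ℂ⁵` (indexed by `0, …, 4`). -/
def e (i : Fin 5) : V5 := Pi.single i 1

/-- The wedge product `u ∧ v` of two vectors, as an element of the exterior algebra. -/
def wedge (u v : V5) : ΛV := ExteriorAlgebra.ι ℂ u * ExteriorAlgebra.ι ℂ v

/-- The Plücker-embedded Grassmannian `G(2,5) ⊆ ℙ⁹ = ℙ(Λ²ℂ⁵)`:
classes of nonzero decomposable bivectors. -/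
def G25 : Set (Projectivization ℂ ΛV) :=
  {P | ∃ u v : V5, ∃ h : wedge u v ≠ 0, P = Projectivization.mk ℂ (wedge u v) h}

/-- The projective linear subspace associated to a linear subspace. -/
def projSet (W : Submodule ℂ ΛV) : Set (Projectivization ℂ ΛV) :=
  {P | P.rep ∈ W}

/-- The line `ℓ = {[e₁ ∧ (t e₂ + s e₃)] : [t:s] ∈ ℙ¹} ⊆ G(2,5)`. -/
def lineL : Set (Projectivization ℂ ΛV) :=
  {P | ∃ t s : ℂ, ∃ h : wedge (e 0) (t • e 1 + s • e 2) ≠ 0,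
    P = Projectivization.mk ℂ (wedge (e 0) (t • e 1 + s • e 2)) h}

/-- The hyperplane `{x₄₅ = 0}` of `Λ²ℂ⁵`: the span of all basis bivectors
`eᵢ ∧ eⱼ` other than `±e₄ ∧ e₅`.  A bivector has vanishing Plücker coordinate
`x₄₅` iff it lies in this subspace. -/
def W45 : Submodule ℂ ΛV :=
  Submodule.span ℂ
    {z | ∃ i j : Fin 5, ¬(i = 3 ∧ j = 4) ∧ ¬(i = 4 ∧ j = 3) ∧ z = wedge (e i) (e j)}

namespace Stmt5Aux

open ExteriorAlgebra

/-! ### Wedge algebra -/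

lemma wedge_add_right (u x y : V5) : wedge u (x + y) = wedge u x + wedge u y := by
  simp [wedge, mul_add]

lemma wedge_smul_right (u : V5) (a : ℂ) (x : V5) : wedge u (a • x) = a • wedge u x := by
  simp [wedge, mul_smul_comm]

lemma wedge_add_left (x y u : V5) : wedge (x + y) u = wedge x u + wedge y u := by
  simp [wedge, add_mul]

lemma wedge_smul_left (a : ℂ) (x u : V5) : wedge (a • x) u = a • wedge x u := by
  simp [wedge, smul_mul_assoc]

lemma wedge_neg_left (x u : V5) : wedge (-x) u = -(wedge x u) := by
  simp [wedge]

lemma wedge_self (u : V5) : wedge u u = 0 := ι_sq_zero u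

lemma ι_swap (a b : V5) : ExteriorAlgebra.ι ℂ a * ExteriorAlgebra.ι ℂ b
    = -(ExteriorAlgebra.ι ℂ b * ExteriorAlgebra.ι ℂ a) :=
  eq_neg_of_add_eq_zero_left (ι_add_mul_swap (R := ℂ) a b)

lemma wedge_antisymm (u v : V5) : wedge u v = - wedge v u := ι_swap u v

lemma ι_mul_wedge_comm (a z w : V5) :
    ExteriorAlgebra.ι ℂ a * wedge z w = wedge z w * ExteriorAlgebra.ι ℂ a := by
  unfold wedge
  rw [← mul_assoc, ι_swap a z, neg_mul, mul_assoc, ι_swap a w, mul_neg, neg_neg, mul_assoc]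

lemma wedge_mul_comm (x y z w : V5) : wedge x y * wedge z w = wedge z w * wedge x y := by
  calc wedge x y * wedge z w
      = ExteriorAlgebra.ι ℂ x * (ExteriorAlgebra.ι ℂ y * wedge z w) := by rw [wedge, mul_assoc]
    _ = ExteriorAlgebra.ι ℂ x * (wedge z w * ExteriorAlgebra.ι ℂ y) := by rw [ι_mul_wedge_comm]
    _ = (ExteriorAlgebra.ι ℂ x * wedge z w) * ExteriorAlgebra.ι ℂ y := by rw [mul_assoc]
    _ = (wedge z w * ExteriorAlgebra.ι ℂ x) * ExteriorAlgebra.ι ℂ y := by rw [ι_mul_wedge_comm]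
    _ = wedge z w * wedge x y := by
        rw [show wedge x y = ExteriorAlgebra.ι ℂ x * ExteriorAlgebra.ι ℂ y from rfl, mul_assoc]

lemma wedge_mul_wedge_left (x y z : V5) : wedge x y * wedge x z = 0 := by
  unfold wedge
  rw [mul_assoc, ← mul_assoc (ExteriorAlgebra.ι ℂ y), ι_swap y x, neg_mul, mul_neg,
    ← mul_assoc, ← mul_assoc, ι_sq_zero, zero_mul, zero_mul, neg_zero]

/-! ### Determinant functionals -/

def detR : V5 [⋀^Fin 5]→ₗ[ℂ] ℂ := Matrix.detRowAlternating

set_option maxRecDepth 10000 in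
lemma detR_eq (r : Fin 5 → V5) : detR r = Matrix.det (Matrix.of r) := rfl

def ω4 (c : V5) : V5 [⋀^Fin 4]→ₗ[ℂ] ℂ := (detR : V5 [⋀^Fin (4+1)]→ₗ[ℂ] ℂ).curryLeft c

def F4 (c : V5) : ∀ i : ℕ, V5 [⋀^Fin i]→ₗ[ℂ] ℂ := Function.update (fun _ => 0) 4 (ω4 c)

def φ4 (c : V5) : ΛV →ₗ[ℂ] ℂ := ExteriorAlgebra.liftAlternating (F4 c)

lemma φ4_wedge (c x y z w : V5) :
    φ4 c (wedge x y * wedge z w) = detR ![c, x, y, z, w] := by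
  have h : wedge x y * wedge z w = ExteriorAlgebra.ιMulti ℂ 4 ![x, y, z, w] := by
    rw [ExteriorAlgebra.ιMulti_apply]
    simp [wedge, mul_assoc]
  rw [h, φ4, ExteriorAlgebra.liftAlternating_apply_ιMulti]
  show F4 c 4 ![x,y,z,w] = _
  have h2 : F4 c 4 = ω4 c := Function.update_self _ _ _
  rw [h2]
  simp only [ω4, AlternatingMap.curryLeft_apply_apply]

def ω2 (c0 c1 c2 : V5) : V5 [⋀^Fin 2]→ₗ[ℂ] ℂ :=
  ((((detR : V5 [⋀^Fin (4+1)]→ₗ[ℂ] ℂ).curryLeft c0 : V5 [⋀^Fin (3+1)]→ₗ[ℂ] ℂ).curryLeft c1 :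
    V5 [⋀^Fin (2+1)]→ₗ[ℂ] ℂ).curryLeft c2)

def F2 (c0 c1 c2 : V5) : ∀ i : ℕ, V5 [⋀^Fin i]→ₗ[ℂ] ℂ :=
  Function.update (fun _ => 0) 2 (ω2 c0 c1 c2)

def φ2 (c0 c1 c2 : V5) : ΛV →ₗ[ℂ] ℂ := ExteriorAlgebra.liftAlternating (F2 c0 c1 c2)

lemma φ2_wedge (c0 c1 c2 x y : V5) :
    φ2 c0 c1 c2 (wedge x y) = detR ![c0, c1, c2, x, y] := by
  have h : wedge x y = ExteriorAlgebra.ιMulti ℂ 2 ![x, y] := by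
    rw [ExteriorAlgebra.ιMulti_apply]
    simp [wedge, mul_assoc]
  rw [h, φ2, ExteriorAlgebra.liftAlternating_apply_ιMulti]
  show F2 c0 c1 c2 2 ![x,y] = _
  have h2 : F2 c0 c1 c2 2 = ω2 c0 c1 c2 := Function.update_self _ _ _
  rw [h2]
  simp only [ω2, AlternatingMap.curryLeft_apply_apply]

lemma det_ne_zero_of_li {r : Fin 5 → V5} (h : LinearIndependent ℂ r) : detR r ≠ 0 := by
  have h1 : IsUnit (Matrix.of r) := Matrix.linearIndependent_rows_iff_isUnit.mp h
  have h2 := (Matrix.isUnit_iff_isUnit_det _).mp h1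
  rw [detR_eq]
  exact h2.ne_zero

lemma li_e (σ : Fin 5 → Fin 5) (hσ : Function.Injective σ) :
    LinearIndependent ℂ (fun i => e (σ i)) := by
  have hb := (Pi.basisFun ℂ (Fin 5)).linearIndependent
  have h : (fun i => e (σ i)) = (Pi.basisFun ℂ (Fin 5)) ∘ σ := by
    funext i; simp [e]
  rw [h]
  exact hb.comp σ hσ

/-- `e₀ ∧ (t e₁ + s e₂) ≠ 0` when `(t,s) ≠ (0,0)`. -/
lemma wedgeL_ne (t s : ℂ) (h : ¬(t = 0 ∧ s = 0)) :
    wedge (e 0) (t • e 1 + s • e 2) ≠ 0 := by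
  intro h0
  have expand : wedge (e 0) (t • e 1 + s • e 2)
      = t • wedge (e 0) (e 1) + s • wedge (e 0) (e 2) := by
    rw [wedge_add_right, wedge_smul_right, wedge_smul_right]
  rcases not_and_or.mp h with ht | hs
  · have h1 := congrArg (φ2 (e 2) (e 3) (e 4)) h0
    rw [expand] at h1
    simp only [map_add, map_smul, φ2_wedge, map_zero, smul_eq_mul] at h1
    have hz : detR ![e 2, e 3, e 4, e 0, e 2] = 0 :=
      detR.map_eq_zero_of_eq _ (show (![e 2, e 3, e 4, e 0, e 2] : Fin 5 → V5) 0
        = ![e 2, e 3, e 4, e 0, e 2] 4 from rfl) (by decide)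
    have hnz : detR ![e 2, e 3, e 4, e 0, e 1] ≠ 0 := by
      have heq : (![e 2, e 3, e 4, e 0, e 1] : Fin 5 → V5)
          = fun i => e ((![2, 3, 4, 0, 1] : Fin 5 → Fin 5) i) := by
        funext i; fin_cases i <;> rfl
      rw [heq]
      exact det_ne_zero_of_li (li_e _ (by decide))
    rw [hz, mul_zero, add_zero] at h1
    exact ht (by rcases mul_eq_zero.mp h1 with h | h; exact h; exact absurd h hnz)
  · have h1 := congrArg (φ2 (e 1) (e 3) (e 4)) h0
    rw [expand] at h1
    simp only [map_add, map_smul, φ2_wedge, map_zero, smul_eq_mul] at h1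
    have hz : detR ![e 1, e 3, e 4, e 0, e 1] = 0 :=
      detR.map_eq_zero_of_eq _ (show (![e 1, e 3, e 4, e 0, e 1] : Fin 5 → V5) 0
        = ![e 1, e 3, e 4, e 0, e 1] 4 from rfl) (by decide)
    have hnz : detR ![e 1, e 3, e 4, e 0, e 2] ≠ 0 := by
      have heq : (![e 1, e 3, e 4, e 0, e 2] : Fin 5 → V5)
          = fun i => e ((![1, 3, 4, 0, 2] : Fin 5 → Fin 5) i) := by
        funext i; fin_cases i <;> rfl
      rw [heq]
      exact det_ne_zero_of_li (li_e _ (by decide))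
    rw [hz, mul_zero, zero_add] at h1
    exact hs (by rcases mul_eq_zero.mp h1 with h | h; exact h; exact absurd h hnz)

/-! ### Projectivization helpers -/

lemma rep_mk_smul {x : ΛV} (hx : x ≠ 0) (P : Projectivization ℂ ΛV)
    (hP : P = Projectivization.mk ℂ x hx) : ∃ c : ℂˣ, P.rep = (c : ℂ) • x := by
  have h : Projectivization.mk ℂ P.rep P.rep_nonzero = Projectivization.mk ℂ x hx := by
    rw [Projectivization.mk_rep, hP]
  obtain ⟨a, ha⟩ := (Projectivization.mk_eq_mk_iff ℂ _ _ _ _).mp h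
  exact ⟨a, ha.symm⟩

lemma eq_mk_of_rep {P : Projectivization ℂ ΛV} {x : ΛV} (hx : x ≠ 0) (h : P.rep = x) :
    P = Projectivization.mk ℂ x hx := by
  rw [← Projectivization.mk_rep P]
  exact (Projectivization.mk_eq_mk_iff ℂ _ _ _ _).mpr ⟨1, by simp [h]⟩

lemma mem_G25_of_rep {P : Projectivization ℂ ΛV} {x y : V5} (h : P.rep = wedge x y) :
    P ∈ G25 :=
  ⟨x, y, h ▸ P.rep_nonzero, eq_mk_of_rep _ h⟩

lemma mem_lineL_of_rep {P : Projectivization ℂ ΛV} {t s : ℂ}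
    (h : P.rep = wedge (e 0) (t • e 1 + s • e 2)) : P ∈ lineL :=
  ⟨t, s, h ▸ P.rep_nonzero, eq_mk_of_rep _ h⟩

lemma finrank_span_pair {x y : ΛV} (h : LinearIndependent ℂ ![x, y]) :
    Module.finrank ℂ (Submodule.span ℂ ({x, y} : Set ΛV)) = 2 := by
  have hs : ({x, y} : Set ΛV) = Set.range ![x, y] := by
    ext z
    simp [Fin.exists_fin_two, eq_comm]
    tauto
  rw [hs, finrank_span_eq_card h]
  simp

/-! ### The master line construction -/

lemma line_or_lineL (b : Projectivization ℂ ΛV) (w p q : V5)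
    (hX : wedge w p ≠ 0) (hY : wedge w q ≠ 0)
    (hbmk : b = Projectivization.mk ℂ (wedge w p) hX)
    (hline : Projectivization.mk ℂ (wedge w q) hY ∈ lineL) :
    (∃ W : Submodule ℂ ΛV, Module.finrank ℂ W = 2 ∧
      projSet W ⊆ G25 ∧ b ∈ projSet W ∧ (projSet W ∩ lineL).Nonempty) ∨ b ∈ lineL := by
  by_cases hli : LinearIndependent ℂ ![wedge w p, wedge w q]
  · left
    refine ⟨Submodule.span ℂ {wedge w p, wedge w q}, finrank_span_pair hli, ?_, ?_, ?_⟩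
    · intro P hP
      obtain ⟨m, n, hmn⟩ := Submodule.mem_span_pair.mp hP
      have h : P.rep = wedge w (m • p + n • q) := by
        rw [wedge_add_right, wedge_smul_right, wedge_smul_right, hmn]
      exact mem_G25_of_rep h
    · obtain ⟨c, hc⟩ := rep_mk_smul hX b hbmk
      have hm : b.rep ∈ Submodule.span ℂ ({wedge w p, wedge w q} : Set ΛV) := by
        rw [hc]
        exact Submodule.smul_mem _ _ (Submodule.subset_span (by simp))
      exact hm
    · refine ⟨Projectivization.mk ℂ (wedge w q) hY, ?_, hline⟩
      obtain ⟨c, hc⟩ := rep_mk_smul hY _ rfl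
      have hm : (Projectivization.mk ℂ (wedge w q) hY).rep ∈
          Submodule.span ℂ ({wedge w p, wedge w q} : Set ΛV) := by
        rw [hc]
        exact Submodule.smul_mem _ _ (Submodule.subset_span (by simp))
      exact hm
  · right
    rw [LinearIndependent.pair_iff' hX] at hli
    push_neg at hli
    obtain ⟨a, ha⟩ := hli
    have ha0 : a ≠ 0 := by
      rintro rfl
      rw [zero_smul] at ha
      exact hY ha.symm
    have hmk : Projectivization.mk ℂ (wedge w q) hY = Projectivization.mk ℂ (wedge w p) hX :=
      (Projectivization.mk_eq_mk_iff ℂ _ _ _ _).mpr ⟨Units.mk0 a ha0, by rw [Units.smul_def]; simpa using ha⟩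
    rw [hbmk, ← hmk]
    exact hline


/-! ### `b` is not on `ℓ` -/

lemma not_mem_lineL {b : Projectivization ℂ ΛV}
    (hnoline : ¬ ∃ W : Submodule ℂ ΛV, Module.finrank ℂ W = 2 ∧
      projSet W ⊆ G25 ∧ b ∈ projSet W ∧ (projSet W ∩ lineL).Nonempty) :
    b ∉ lineL := by
  intro hbl
  obtain ⟨t, s, hts, hbmk⟩ := hbl
  apply hnoline
  have hli : LinearIndependent ℂ ![wedge (e 0) (e 1), wedge (e 0) (e 2)] := by
    rw [LinearIndependent.pair_iff]
    intro m n hmn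
    by_contra hc
    rw [not_and_or] at hc
    refine wedgeL_ne m n ?_ ?_
    · rcases hc with h | h <;> tauto
    · rw [wedge_add_right, wedge_smul_right, wedge_smul_right]
      exact hmn
  refine ⟨Submodule.span ℂ {wedge (e 0) (e 1), wedge (e 0) (e 2)},
    finrank_span_pair hli, ?_, ?_, ?_⟩
  · intro P hP
    obtain ⟨m, n, hmn⟩ := Submodule.mem_span_pair.mp hP
    have h : P.rep = wedge (e 0) (m • e 1 + n • e 2) := by
      rw [wedge_add_right, wedge_smul_right, wedge_smul_right, hmn]
    exact mem_G25_of_rep h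
  · obtain ⟨c, hc⟩ := rep_mk_smul hts b hbmk
    have hm : b.rep ∈ Submodule.span ℂ ({wedge (e 0) (e 1), wedge (e 0) (e 2)} : Set ΛV) := by
      rw [hc, wedge_add_right, wedge_smul_right, wedge_smul_right]
      refine Submodule.smul_mem _ _ (Submodule.add_mem _ ?_ ?_) <;>
        exact Submodule.smul_mem _ _ (Submodule.subset_span (by simp))
    exact hm
  · have h1 : wedge (e 0) ((1:ℂ) • e 1 + (0:ℂ) • e 2) ≠ 0 := wedgeL_ne 1 0 (by simp)
    refine ⟨Projectivization.mk ℂ _ h1, ?_, ⟨1, 0, h1, rfl⟩⟩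
    obtain ⟨c, hc⟩ := rep_mk_smul h1 _ rfl
    have hm : (Projectivization.mk ℂ _ h1).rep ∈
        Submodule.span ℂ ({wedge (e 0) (e 1), wedge (e 0) (e 2)} : Set ΛV) := by
      rw [hc]
      refine Submodule.smul_mem _ _ ?_
      have : wedge (e 0) ((1:ℂ) • e 1 + (0:ℂ) • e 2) = wedge (e 0) (e 1) := by
        norm_num
      rw [this]
      exact Submodule.subset_span (by simp)
    exact hm

/-! ### The key Plücker-quadric computation -/

lemma sq_zero_coeffs {u v : V5} (h5 : LinearIndependent ℂ ![u, v, e 0, e 1, e 2])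
    (a m n : ℂ)
    (hsq : (a • wedge u v + (m • wedge (e 0) (e 1) + n • wedge (e 0) (e 2))) *
           (a • wedge u v + (m • wedge (e 0) (e 1) + n • wedge (e 0) (e 2))) = 0) :
    a * m = 0 ∧ a * n = 0 := by
  have hXX : wedge u v * wedge u v = 0 := wedge_mul_wedge_left u v v
  have hYY : wedge (e 0) (e 1) * wedge (e 0) (e 1) = 0 := wedge_mul_wedge_left _ _ _
  have hZZ : wedge (e 0) (e 2) * wedge (e 0) (e 2) = 0 := wedge_mul_wedge_left _ _ _
  have hYZ : wedge (e 0) (e 1) * wedge (e 0) (e 2) = 0 := wedge_mul_wedge_left _ _ _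
  have hZY : wedge (e 0) (e 2) * wedge (e 0) (e 1) = 0 := wedge_mul_wedge_left _ _ _
  have hYX : wedge (e 0) (e 1) * wedge u v = wedge u v * wedge (e 0) (e 1) :=
    wedge_mul_comm _ _ _ _
  have hZX : wedge (e 0) (e 2) * wedge u v = wedge u v * wedge (e 0) (e 2) :=
    wedge_mul_comm _ _ _ _
  have expand : (a • wedge u v + (m • wedge (e 0) (e 1) + n • wedge (e 0) (e 2))) *
           (a • wedge u v + (m • wedge (e 0) (e 1) + n • wedge (e 0) (e 2)))
      = (2*(a*m)) • (wedge u v * wedge (e 0) (e 1))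
        + (2*(a*n)) • (wedge u v * wedge (e 0) (e 2)) := by
    simp only [mul_add, add_mul, Algebra.mul_smul_comm, Algebra.smul_mul_assoc, smul_smul,
      hXX, hYY, hZZ, hYZ, hZY, hYX, hZX, smul_zero]
    module
  rw [expand] at hsq
  constructor
  · have h1 := congrArg (φ4 (e 2)) hsq
    simp only [map_add, map_smul, φ4_wedge, map_zero, smul_eq_mul] at h1
    have hz : detR ![e 2, u, v, e 0, e 2] = 0 :=
      detR.map_eq_zero_of_eq _ (show (![e 2, u, v, e 0, e 2] : Fin 5 → V5) 0
        = ![e 2, u, v, e 0, e 2] 4 from rfl) (by decide)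
    have hnz : detR ![e 2, u, v, e 0, e 1] ≠ 0 := by
      have heq : (![e 2, u, v, e 0, e 1] : Fin 5 → V5)
          = fun i => ![u, v, e 0, e 1, e 2] ((![4, 0, 1, 2, 3] : Fin 5 → Fin 5) i) := by
        funext i; fin_cases i <;> rfl
      rw [heq]
      exact det_ne_zero_of_li (h5.comp _ (by decide))
    rw [hz, mul_zero, add_zero] at h1
    rcases mul_eq_zero.mp h1 with h | h
    · rcases mul_eq_zero.mp h with h' | h'
      · norm_num at h'
      · exact h'
    · exact absurd h hnz
  · have h1 := congrArg (φ4 (e 1)) hsq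
    simp only [map_add, map_smul, φ4_wedge, map_zero, smul_eq_mul] at h1
    have hz : detR ![e 1, u, v, e 0, e 1] = 0 :=
      detR.map_eq_zero_of_eq _ (show (![e 1, u, v, e 0, e 1] : Fin 5 → V5) 0
        = ![e 1, u, v, e 0, e 1] 4 from rfl) (by decide)
    have hnz : detR ![e 1, u, v, e 0, e 2] ≠ 0 := by
      have heq : (![e 1, u, v, e 0, e 2] : Fin 5 → V5)
          = fun i => ![u, v, e 0, e 1, e 2] ((![3, 0, 1, 2, 4] : Fin 5 → Fin 5) i) := by
        funext i; fin_cases i <;> rfl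
      rw [heq]
      exact det_ne_zero_of_li (h5.comp _ (by decide))
    rw [hz, mul_zero, zero_add] at h1
    rcases mul_eq_zero.mp h1 with h | h
    · rcases mul_eq_zero.mp h with h' | h'
      · norm_num at h'
      · exact h'
    · exact absurd h hnz


/-! ### Independence of `u, v, e₀, e₁, e₂` -/

lemma indep5 {b : Projectivization ℂ ΛV} {u v : V5} (hw : wedge u v ≠ 0)
    (hbmk : b = Projectivization.mk ℂ (wedge u v) hw)
    (hnoline : ¬ ∃ W : Submodule ℂ ΛV, Module.finrank ℂ W = 2 ∧
      projSet W ⊆ G25 ∧ b ∈ projSet W ∧ (projSet W ∩ lineL).Nonempty)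
    (hbl : b ∉ lineL) :
    LinearIndependent ℂ ![u, v, e 0, e 1, e 2] := by
  by_contra hni
  rw [Fintype.linearIndependent_iff] at hni
  push_neg at hni
  obtain ⟨g, hg, i0, hi0⟩ := hni
  have huv : LinearIndependent ℂ ![u, v] := by
    by_contra hd
    rw [linearIndependent_fin2] at hd
    push_neg at hd
    apply hw
    by_cases hv : (![u, v] : Fin 2 → V5) 1 = 0
    · simp only [Matrix.cons_val_one, Matrix.head_cons, Matrix.cons_val_zero] at hv
      rw [hv]
      simp [wedge]
    · obtain ⟨c, hc⟩ := hd hv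
      simp only [Matrix.cons_val_one, Matrix.head_cons, Matrix.cons_val_zero] at hc
      rw [← hc, wedge_smul_left, wedge_self, smul_zero]
  set w : V5 := g 2 • e 0 + g 3 • e 1 + g 4 • e 2 with hwdef
  have hsum : (g 0 • u + g 1 • v) + w = 0 := by
    rw [Fin.sum_univ_five] at hg
    simp only [Matrix.cons_val_zero, Matrix.cons_val_one, Matrix.head_cons,
      Matrix.cons_val_two, Matrix.tail_cons, Matrix.cons_val_three,
      Matrix.cons_val_four] at hg
    rw [hwdef]
    abel_nf
    abel_nf at hg
    exact hg
  have hwcoord : ∀ j : Fin 5, w j = g 2 • (e 0 j) + g 3 • (e 1 j) + g 4 • (e 2 j) := by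
    intro j; rw [hwdef]; rfl
  have hwzero_imp : w = 0 → g 2 = 0 ∧ g 3 = 0 ∧ g 4 = 0 := by
    intro h0
    refine ⟨?_, ?_, ?_⟩
    · have := congrFun h0 0; rw [hwcoord 0] at this; simpa [e, Pi.single_apply] using this
    · have := congrFun h0 1; rw [hwcoord 1] at this; simpa [e, Pi.single_apply] using this
    · have := congrFun h0 2; rw [hwcoord 2] at this; simpa [e, Pi.single_apply] using this
  have hallzero : ¬ (g 0 = 0 ∧ g 1 = 0) ∨ True := Or.inr trivial
  -- w ≠ 0 and (g 0, g 1) ≠ (0,0)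
  have hwne : w ≠ 0 := by
    intro h0
    obtain ⟨h2, h3, h4⟩ := hwzero_imp h0
    rw [h0, add_zero] at hsum
    obtain ⟨h0', h1'⟩ := (LinearIndependent.pair_iff.mp huv) _ _ hsum
    fin_cases i0 <;> simp_all
  have hAB : ¬ (g 0 = 0 ∧ g 1 = 0) := by
    rintro ⟨h0, h1⟩
    rw [h0, h1, zero_smul, zero_smul, add_zero, zero_add] at hsum
    exact hwne hsum
  have hneg : g 0 • u + g 1 • v = -w := eq_neg_of_add_eq_zero_left hsum
  have hz : ∃ z : V5, wedge u v = wedge w z := by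
    rcases not_and_or.mp hAB with h0 | h1
    · -- g 0 ≠ 0 : wedge w v = -(g 0) • wedge u v
      refine ⟨(-(g 0))⁻¹ • v, ?_⟩
      have hwv : wedge w v = (-(g 0)) • wedge u v := by
        have hw2 : w = -(g 0 • u + g 1 • v) := by rw [hneg, neg_neg]
        rw [hw2, wedge_neg_left, wedge_add_left, wedge_smul_left, wedge_smul_left,
          wedge_self, smul_zero, add_zero, neg_smul]
      rw [wedge_smul_right, hwv, smul_smul, inv_mul_cancel₀ (by simpa using h0), one_smul]
    · -- g 1 ≠ 0 : wedge w u = g 1 • wedge u v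
      refine ⟨(g 1)⁻¹ • u, ?_⟩
      have hwu : wedge w u = g 1 • wedge u v := by
        have hw2 : w = -(g 0 • u + g 1 • v) := by rw [hneg, neg_neg]
        rw [hw2, wedge_neg_left, wedge_add_left, wedge_smul_left, wedge_smul_left,
          wedge_self, smul_zero, zero_add, wedge_antisymm v u, smul_neg, neg_neg]
      rw [wedge_smul_right, hwu, smul_smul, inv_mul_cancel₀ h1, one_smul]
  obtain ⟨z, hzeq⟩ := hz
  by_cases hDF : g 3 = 0 ∧ g 4 = 0
  · -- w = g 2 • e 0 with g 2 ≠ 0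
    have hw2 : w = g 2 • e 0 := by
      rw [hwdef, hDF.1, hDF.2, zero_smul, zero_smul, add_zero, add_zero]
    have hg2 : g 2 ≠ 0 := by
      intro h
      exact hwne (by rw [hw2, h, zero_smul])
    have hX' : wedge u v = wedge (e 0) (g 2 • z) := by
      rw [hzeq, hw2, wedge_smul_left, ← wedge_smul_right]
    have hY1 : wedge (e 0) ((1:ℂ) • e 1 + (0:ℂ) • e 2) ≠ 0 := wedgeL_ne 1 0 (by simp)
    have hX0 : wedge (e 0) (g 2 • z) ≠ 0 := hX' ▸ hw
    have hbmk' : b = Projectivization.mk ℂ (wedge (e 0) (g 2 • z)) hX0 := by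
      rw [hbmk]
      exact (Projectivization.mk_eq_mk_iff ℂ _ _ _ _).mpr ⟨1, by simp [hX']⟩
    rcases line_or_lineL b (e 0) (g 2 • z) ((1:ℂ) • e 1 + (0:ℂ) • e 2) hX0 hY1 hbmk'
        ⟨1, 0, hY1, rfl⟩ with hL | hL
    · exact hnoline hL
    · exact hbl hL
  · -- (g 3, g 4) ≠ (0,0)
    have hY1 : wedge (e 0) (g 3 • e 1 + g 4 • e 2) ≠ 0 := wedgeL_ne _ _ hDF
    have hwq : wedge w ((-1 : ℂ) • e 0) = wedge (e 0) (g 3 • e 1 + g 4 • e 2) := by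
      rw [wedge_smul_right, hwdef, wedge_add_left, wedge_add_left, wedge_smul_left,
        wedge_smul_left, wedge_smul_left, wedge_self, smul_zero, zero_add,
        wedge_antisymm (e 1) (e 0), wedge_antisymm (e 2) (e 0),
        wedge_add_right, wedge_smul_right, wedge_smul_right]
      module
    have hY0 : wedge w ((-1 : ℂ) • e 0) ≠ 0 := by rw [hwq]; exact hY1
    have hX0 : wedge w z ≠ 0 := hzeq ▸ hw
    have hbmk' : b = Projectivization.mk ℂ (wedge w z) hX0 := by
      rw [hbmk]
      exact (Projectivization.mk_eq_mk_iff ℂ _ _ _ _).mpr ⟨1, by simp [hzeq]⟩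
    have hline : Projectivization.mk ℂ (wedge w ((-1 : ℂ) • e 0)) hY0 ∈ lineL := by
      refine ⟨g 3, g 4, hY1, ?_⟩
      exact (Projectivization.mk_eq_mk_iff ℂ _ _ _ _).mpr
        ⟨1, by rw [Units.smul_def, Units.val_one, one_smul, hwq]⟩
    rcases line_or_lineL b w z ((-1 : ℂ) • e 0) hX0 hY0 hbmk' hline with hL | hL
    · exact hnoline hL
    · exact hbl hL

end Stmt5Aux

open Stmt5Aux in
/-- if `b ∈ G(2,5)` does not lie on any line contained in `G(2,5)`
that meets `ℓ = {[e₁ ∧ (t e₂ + s e₃)]}`, then the linear span of `{b} ∪ ℓ` in `ℙ⁹`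
intersects `G(2,5)` exactly in `{b} ∪ ℓ`. -/
theorem stmt5 (b : Projectivization ℂ ΛV) (hb : b ∈ G25)
    (hnoline : ¬ ∃ W : Submodule ℂ ΛV, Module.finrank ℂ W = 2 ∧
      projSet W ⊆ G25 ∧ b ∈ projSet W ∧ (projSet W ∩ lineL).Nonempty) :
    G25 ∩ projSet (Submodule.span ℂ (Projectivization.rep '' insert b lineL)) =
      insert b lineL := by
  obtain ⟨u, v, hw, hbmk⟩ := hb
  have hbl : b ∉ lineL := not_mem_lineL hnoline
  have h5 : LinearIndependent ℂ ![u, v, e 0, e 1, e 2] := indep5 hw hbmk hnoline hbl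
  ext P
  constructor
  · rintro ⟨hPG, hPM⟩
    -- the span of the reps is contained in span {u∧v, e₀∧e₁, e₀∧e₂}
    have hM : Submodule.span ℂ (Projectivization.rep '' insert b lineL) ≤
        Submodule.span ℂ
          (insert (wedge u v) {wedge (e 0) (e 1), wedge (e 0) (e 2)} : Set ΛV) := by
      rw [Submodule.span_le]
      rintro _ ⟨Q, hQ, rfl⟩
      rcases hQ with rfl | hQl
      · obtain ⟨c, hc⟩ := rep_mk_smul hw Q hbmk
        rw [hc]
        exact Submodule.smul_mem _ _ (Submodule.subset_span (by simp))
      · obtain ⟨t, s, hts, hQmk⟩ := hQl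
        obtain ⟨c, hc⟩ := rep_mk_smul hts Q hQmk
        rw [hc, wedge_add_right, wedge_smul_right, wedge_smul_right]
        refine Submodule.smul_mem _ _ (Submodule.add_mem _ ?_ ?_) <;>
          exact Submodule.smul_mem _ _ (Submodule.subset_span (by simp))
    have hPM' := hM hPM
    rw [Submodule.mem_span_insert] at hPM'
    obtain ⟨a, zz, hzz, hPrep⟩ := hPM'
    obtain ⟨m, n, hmn⟩ := Submodule.mem_span_pair.mp hzz
    -- decomposability of P.rep
    obtain ⟨u', v', hw', hPmk⟩ := hPG
    obtain ⟨c, hc⟩ := rep_mk_smul hw' P hPmk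
    have hsq0 : P.rep * P.rep = 0 := by
      rw [hc, Algebra.mul_smul_comm, Algebra.smul_mul_assoc, wedge_mul_wedge_left,
        smul_zero, smul_zero]
    rw [hPrep, ← hmn] at hsq0
    obtain ⟨ham, han⟩ := sq_zero_coeffs h5 a m n hsq0
    by_cases ha : a = 0
    · -- P on the line ℓ
      right
      rw [ha, zero_smul, zero_add] at hPrep
      have h : P.rep = wedge (e 0) (m • e 1 + n • e 2) := by
        rw [hPrep, ← hmn, wedge_add_right, wedge_smul_right, wedge_smul_right]
      exact mem_lineL_of_rep h
    · -- P = b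
      left
      have hm0 : m = 0 := by
        rcases mul_eq_zero.mp ham with h | h
        · exact absurd h ha
        · exact h
      have hn0 : n = 0 := by
        rcases mul_eq_zero.mp han with h | h
        · exact absurd h ha
        · exact h
      have hrep : P.rep = a • wedge u v := by
        rw [hPrep, ← hmn, hm0, hn0, zero_smul, zero_smul, add_zero, add_zero]
      have haw : a • wedge u v ≠ 0 := by
        rw [← hrep]; exact P.rep_nonzero
      have : P = Projectivization.mk ℂ (a • wedge u v) haw := eq_mk_of_rep haw hrep
      rw [this, hbmk]
      exact (Projectivization.mk_eq_mk_iff ℂ _ _ _ _).mpr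
        ⟨Units.mk0 a ha, by rw [Units.smul_def, Units.val_mk0]⟩
  · intro hP
    have hrepmem : P.rep ∈ Submodule.span ℂ (Projectivization.rep '' insert b lineL) :=
      Submodule.subset_span ⟨P, hP, rfl⟩
    rcases hP with rfl | hPl
    · exact ⟨⟨u, v, hw, hbmk⟩, hrepmem⟩
    · obtain ⟨t, s, hts, hPmk⟩ := hPl
      exact ⟨⟨e 0, t • e 1 + s • e 2, hts, hPmk⟩, hrepmem⟩
end
end

section
/- The set of lines in the Plücker-embedded Grassmannian G(2,5) ⊂ ℙ⁹ passing through a point of N₂ := ℙ(span{e₁∧e₂, e₂∧e₃, e₁∧e₃}) sweeps out exactly the hyperplane section {x₄₅ = 0} ∩ G(2,5). -/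
noncomputable section

/-- `N₂ = ℙ(span{e₁∧e₂, e₂∧e₃, e₁∧e₃}) ≅ ℙ²`, the 2-planes contained in
`span(e₁,e₂,e₃)`. -/
def N2 : Submodule ℂ ΛV :=
  Submodule.span ℂ {wedge (e 0) (e 1), wedge (e 1) (e 2), wedge (e 0) (e 2)}

open ExteriorAlgebra

/-! ### wedge algebra -/

lemma iota_anticomm (u v : V5) :
    ExteriorAlgebra.ι ℂ v * ExteriorAlgebra.ι ℂ u
      = -(ExteriorAlgebra.ι ℂ u * ExteriorAlgebra.ι ℂ v) := by
  have h := ι_sq_zero (R := ℂ) (u + v)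
  rw [map_add, add_mul, mul_add, mul_add, ι_sq_zero, ι_sq_zero] at h
  linear_combination (norm := noncomm_ring) h

lemma wedge_anticomm (u v : V5) : wedge v u = - wedge u v := iota_anticomm u v
lemma wedge_self (u : V5) : wedge u u = 0 := ι_sq_zero u

lemma iota_comm_wedge (w u v : V5) :
    ExteriorAlgebra.ι ℂ w * wedge u v = wedge u v * ExteriorAlgebra.ι ℂ w := by
  unfold wedge
  rw [← mul_assoc, iota_anticomm u w, neg_mul, mul_assoc, iota_anticomm v w, mul_neg, neg_neg,
    ← mul_assoc]

lemma wedge_mul_comm (u v a b : V5) :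
    wedge a b * wedge u v = wedge u v * wedge a b := by
  show ExteriorAlgebra.ι ℂ a * ExteriorAlgebra.ι ℂ b * wedge u v = _
  rw [mul_assoc, iota_comm_wedge, ← mul_assoc, iota_comm_wedge, mul_assoc]
  rfl

lemma wedge_sq (u v : V5) : wedge u v * wedge u v = 0 := by
  unfold wedge
  rw [mul_assoc, ← mul_assoc (ExteriorAlgebra.ι ℂ v), iota_anticomm u v]
  simp [ι_sq_zero, mul_assoc]

lemma wedge_add_right (u v v' : V5) : wedge u (v + v') = wedge u v + wedge u v' := by
  simp [wedge, map_add, mul_add]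
lemma wedge_smul_left (c : ℂ) (u v : V5) : wedge (c • u) v = c • wedge u v := by
  simp [wedge, map_smul, smul_mul_assoc]
lemma wedge_smul_right (c : ℂ) (u v : V5) : wedge u (c • v) = c • wedge u v := by
  simp [wedge, map_smul, mul_smul_comm]
lemma wedge_sub_left (u u' v : V5) : wedge (u - u') v = wedge u v - wedge u' v := by
  simp [wedge, map_sub, sub_mul]
lemma wedge_zero_left (v : V5) : wedge 0 v = 0 := by simp [wedge]

lemma wedge_eq_zero_of_minors (u v : V5) (h : ∀ i j, u i * v j = u j * v i) :
    wedge u v = 0 := by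
  by_cases hu : u = 0
  · rw [hu, wedge_zero_left]
  · obtain ⟨i, hi⟩ := Function.ne_iff.mp hu
    have hi : u i ≠ 0 := hi
    have hv : v = (v i * (u i)⁻¹) • u := by
      funext j
      simp only [Pi.smul_apply, smul_eq_mul]
      linear_combination (u i)⁻¹ * h i j - v j * inv_mul_cancel₀ hi
    rw [hv, wedge_smul_right, wedge_self, smul_zero]

/-! ### coordinate functionals -/

def coordAlt2 (i j : Fin 5) : V5 [⋀^Fin 2]→ₗ[ℂ] ℂ :=
  (Matrix.detRowAlternating : (Fin 2 → ℂ) [⋀^Fin 2]→ₗ[ℂ] ℂ).compLinearMap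
    (LinearMap.funLeft ℂ ℂ ![i, j])

def fam2 (i j : Fin 5) : ∀ n : ℕ, V5 [⋀^Fin n]→ₗ[ℂ] ℂ
  | 2 => coordAlt2 i j
  | _ => 0

def φ (i j : Fin 5) : ΛV →ₗ[ℂ] ℂ := ExteriorAlgebra.liftAlternating (fam2 i j)

lemma wedge_eq_iotaMulti (u v : V5) : wedge u v = ιMulti ℂ 2 ![u, v] := by
  simp [wedge, ιMulti_apply, List.ofFn_succ]

lemma φ_wedge (i j : Fin 5) (u v : V5) :
    φ i j (wedge u v) = u i * v j - u j * v i := by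
  rw [wedge_eq_iotaMulti, φ, liftAlternating_apply_ιMulti]
  show Matrix.det (Matrix.of fun k l => (![u, v] k) (![i, j] l)) = _
  rw [Matrix.det_fin_two]
  simp [Matrix.of_apply]

def coordAlt4 (i j : Fin 5) : V5 [⋀^Fin 4]→ₗ[ℂ] ℂ :=
  (Matrix.detRowAlternating : (Fin 4 → ℂ) [⋀^Fin 4]→ₗ[ℂ] ℂ).compLinearMap
    (LinearMap.funLeft ℂ ℂ ![i, j, 3, 4])

def fam4 (i j : Fin 5) : ∀ n : ℕ, V5 [⋀^Fin n]→ₗ[ℂ] ℂ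
  | 4 => coordAlt4 i j
  | _ => 0

def F (i j : Fin 5) : ΛV →ₗ[ℂ] ℂ := ExteriorAlgebra.liftAlternating (fam4 i j)

lemma F_wedge_wedge (i j : Fin 5) (u v a b : V5) :
    F i j (wedge u v * wedge a b) =
      Matrix.det (Matrix.of fun k l => (![u, v, a, b] k) (![i, j, 3, 4] l)) := by
  have h : wedge u v * wedge a b = ιMulti ℂ 4 ![u, v, a, b] := by
    simp [wedge, ιMulti_apply, List.ofFn_succ, mul_assoc]
  rw [h, F, liftAlternating_apply_ιMulti]
  rfl

/-! ### basis expansion and membership lemmas -/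

lemma basis_expand (u : V5) : u = ∑ i : Fin 5, u i • e i := by
  funext k
  simp [e, Finset.sum_apply, Pi.single_apply]

lemma wedge_expand (u v : V5) :
    wedge u v = ∑ i : Fin 5, ∑ j : Fin 5, (u i * v j) • wedge (e i) (e j) := by
  conv_lhs => rw [basis_expand u, basis_expand v]
  unfold wedge
  rw [map_sum, map_sum, Finset.sum_mul]
  refine Finset.sum_congr rfl fun i _ => ?_
  rw [Finset.mul_sum]
  refine Finset.sum_congr rfl fun j _ => ?_
  rw [map_smul, map_smul, smul_mul_assoc, mul_smul_comm, smul_smul]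

lemma wedge_e_mem_N2 (i j : Fin 5) (hi : (i:ℕ) < 3) (hj : (j:ℕ) < 3) :
    wedge (e i) (e j) ∈ N2 := by
  fin_cases i <;> fin_cases j <;>
  first
    | (rw [wedge_self]; exact Submodule.zero_mem _)
    | (apply Submodule.subset_span; exact Set.mem_insert _ _)
    | (apply Submodule.subset_span; exact Set.mem_insert_of_mem _ (Set.mem_insert _ _))
    | (apply Submodule.subset_span; exact Set.mem_insert_of_mem _ (Set.mem_insert_of_mem _ rfl))
    | (rw [wedge_anticomm]; refine Submodule.neg_mem _ (Submodule.subset_span ?_);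
        first
        | exact Set.mem_insert _ _
        | exact Set.mem_insert_of_mem _ (Set.mem_insert _ _)
        | exact Set.mem_insert_of_mem _ (Set.mem_insert_of_mem _ rfl))
    | (exfalso; revert hi hj; norm_num)

lemma eq_34 (i : Fin 5) (h : ¬ (i:ℕ) < 3) : i = 3 ∨ i = 4 := by
  rcases i with ⟨iv, hiv⟩
  interval_cases iv <;> simp_all

lemma mem_N2 (u v : V5) (hu3 : u 3 = 0) (hu4 : u 4 = 0) (hv3 : v 3 = 0) (hv4 : v 4 = 0) :
    wedge u v ∈ N2 := by
  rw [wedge_expand]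
  refine Submodule.sum_mem _ fun i _ => Submodule.sum_mem _ fun j _ => ?_
  by_cases hi : (i:ℕ) < 3
  · by_cases hj : (j:ℕ) < 3
    · exact Submodule.smul_mem _ _ (wedge_e_mem_N2 i j hi hj)
    · rcases eq_34 j hj with rfl | rfl <;> simp [hv3, hv4]
  · rcases eq_34 i hi with rfl | rfl <;> simp [hu3, hu4]

lemma mem_W45 (u v : V5) (h : u 3 * v 4 - u 4 * v 3 = 0) : wedge u v ∈ W45 := by
  rw [wedge_expand, ← Fintype.sum_prod_type']
  set Fn : Fin 5 × Fin 5 → ΛV := fun p => (u p.1 * v p.2) • wedge (e p.1) (e p.2) with hFn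
  have h1 : ((4:Fin 5), (3:Fin 5)) ∈ (Finset.univ.erase ((3:Fin 5), (4:Fin 5))) := by decide
  have e1 : ∑ p : Fin 5 × Fin 5, Fn p
      = (∑ p ∈ (Finset.univ.erase ((3:Fin 5),(4:Fin 5))).erase ((4:Fin 5),(3:Fin 5)), Fn p
          + Fn ((4:Fin 5),(3:Fin 5))) + Fn ((3:Fin 5),(4:Fin 5)) := by
    rw [Finset.sum_erase_add _ _ h1, Finset.sum_erase_add _ _ (Finset.mem_univ _)]
  rw [e1]
  have h2 : Fn ((4:Fin 5),(3:Fin 5)) + Fn ((3:Fin 5),(4:Fin 5)) = 0 := by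
    simp only [hFn]
    rw [wedge_anticomm (e 3) (e 4)]
    rw [smul_neg, neg_add_eq_sub, ← sub_smul]
    rw [show u 3 * v 4 - u 4 * v 3 = 0 from h, zero_smul]
  rw [add_assoc, h2, add_zero]
  refine Submodule.sum_mem _ fun p hp => ?_
  rw [Finset.mem_erase, Finset.mem_erase] at hp
  refine Submodule.smul_mem _ _ (Submodule.subset_span ⟨p.1, p.2, ?_, ?_, rfl⟩)
  · rintro ⟨ha, hb⟩; exact hp.2.1 (Prod.ext ha hb)
  · rintro ⟨ha, hb⟩; exact hp.1 (Prod.ext ha hb)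

lemma W45_le_ker : W45 ≤ LinearMap.ker (φ 3 4) := by
  rw [W45, Submodule.span_le]
  rintro z ⟨i, j, h1, h2, rfl⟩
  rw [SetLike.mem_coe, LinearMap.mem_ker, φ_wedge]
  fin_cases i <;> fin_cases j <;> simp_all [e, Pi.single_apply]

lemma N2_le_W45 : N2 ≤ W45 := by
  rw [N2, Submodule.span_le]
  rintro z (rfl | rfl | rfl)
  · exact Submodule.subset_span ⟨0, 1, by decide, by decide, rfl⟩
  · exact Submodule.subset_span ⟨1, 2, by decide, by decide, rfl⟩
  · exact Submodule.subset_span ⟨0, 2, by decide, by decide, rfl⟩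

/-! ### linear independence via functionals -/

lemma indep_of_funcs (x y : ΛV) (f g : ΛV →ₗ[ℂ] ℂ)
    (h : f x * g y - f y * g x ≠ 0) : LinearIndependent ℂ ![x, y] := by
  rw [linearIndependent_fin2]
  simp only [Matrix.cons_val_one, Matrix.head_cons, Matrix.cons_val_zero]
  constructor
  · rintro rfl; simp at h
  · intro a ha
    apply h
    rw [← ha, map_smul, map_smul, smul_eq_mul, smul_eq_mul]
    ring

lemma rep_mk_scalar (x : ΛV) (hx : x ≠ 0) :
    ∃ c : ℂ, c ≠ 0 ∧ (Projectivization.mk ℂ x hx).rep = c • x := by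
  obtain ⟨a, ha⟩ := Projectivization.exists_smul_eq_mk_rep ℂ x hx
  exact ⟨(a : ℂ), a.ne_zero, by rw [← ha, Units.smul_def]⟩

lemma det4_eval (r0 r1 r2 r3 : Fin 4 → ℂ) :
    Matrix.det (Matrix.of ![r0, r1, r2, r3]) =
      r0 0 * (r1 1 * (r2 2 * r3 3 - r2 3 * r3 2) - r1 2 * (r2 1 * r3 3 - r2 3 * r3 1)
        + r1 3 * (r2 1 * r3 2 - r2 2 * r3 1))
      - r0 1 * (r1 0 * (r2 2 * r3 3 - r2 3 * r3 2) - r1 2 * (r2 0 * r3 3 - r2 3 * r3 0)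
        + r1 3 * (r2 0 * r3 2 - r2 2 * r3 0))
      + r0 2 * (r1 0 * (r2 1 * r3 3 - r2 3 * r3 1) - r1 1 * (r2 0 * r3 3 - r2 3 * r3 0)
        + r1 3 * (r2 0 * r3 1 - r2 1 * r3 0))
      - r0 3 * (r1 0 * (r2 1 * r3 2 - r2 2 * r3 1) - r1 1 * (r2 0 * r3 2 - r2 2 * r3 0)
        + r1 2 * (r2 0 * r3 1 - r2 1 * r3 0)) := by
  simp [Matrix.det_succ_row_zero, Fin.sum_univ_succ, Matrix.det_fin_three,
    show (Fin.succ 2 : Fin 4) = 3 from rfl, show Fin.succAbove 2 2 = (3:Fin 4) from rfl,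
    show Fin.succAbove 1 2 = (3:Fin 4) from rfl, show Fin.castSucc 2 = (2:Fin 4) from rfl, show Fin.succAbove 3 2 = (2:Fin 4) from rfl]
  ring

lemma e_apply_self (i : Fin 5) : e i i = 1 := Pi.single_eq_same i 1
lemma e_apply_ne {i k : Fin 5} (h : k ≠ i) : e i k = 0 := by
  simp [e, Pi.single_apply, h]

lemma F_diag (i j : Fin 5) (u v : V5) (hi3 : i ≠ 3) (hi4 : i ≠ 4) (hj3 : j ≠ 3)
    (hj4 : j ≠ 4) (hij : i ≠ j) :
    F i j (wedge u v * wedge (e i) (e j)) = u 3 * v 4 - u 4 * v 3 := by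
  rw [F_wedge_wedge]
  have hm : (Matrix.of fun k l => (![u, v, e i, e j] k) (![i, j, 3, 4] l))
      = Matrix.of ![![u i, u j, u 3, u 4], ![v i, v j, v 3, v 4],
          ![1,0,0,0], ![0,1,0,0]] := by
    ext k l
    fin_cases k <;> fin_cases l <;>
      simp [e_apply_self, e_apply_ne, hij, Ne.symm hij, Ne.symm hi3, Ne.symm hi4,
        Ne.symm hj3, Ne.symm hj4]
  rw [hm, det4_eval]
  simp only [show (1 : Fin 4) = Fin.succ 0 from rfl, show (2 : Fin 4) = Fin.succ (Fin.succ 0) from rfl,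
    show (3 : Fin 4) = Fin.succ (Fin.succ (Fin.succ 0)) from rfl, Matrix.cons_val_succ,
    Matrix.cons_val_zero]
  ring

lemma F_off_left (i j k l : Fin 5) (u v : V5) (h1 : e k i = 0) (h2 : e k j = 0)
    (h3 : e k 3 = 0) (h4 : e k 4 = 0) :
    F i j (wedge u v * wedge (e k) (e l)) = 0 := by
  rw [F_wedge_wedge]
  have hm : (Matrix.of fun a b => (![u, v, e k, e l] a) (![i, j, 3, 4] b))
      = Matrix.of ![![u i, u j, u 3, u 4], ![v i, v j, v 3, v 4],
          ![0,0,0,0], ![e l i, e l j, e l 3, e l 4]] := by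
    ext a b
    fin_cases a <;> fin_cases b <;> simp [h1, h2, h3, h4]
  rw [hm, det4_eval]
  simp only [show (1 : Fin 4) = Fin.succ 0 from rfl, show (2 : Fin 4) = Fin.succ (Fin.succ 0) from rfl,
    show (3 : Fin 4) = Fin.succ (Fin.succ (Fin.succ 0)) from rfl, Matrix.cons_val_succ,
    Matrix.cons_val_zero]
  ring

lemma F_off_right (i j k l : Fin 5) (u v : V5) (h1 : e l i = 0) (h2 : e l j = 0)
    (h3 : e l 3 = 0) (h4 : e l 4 = 0) :
    F i j (wedge u v * wedge (e k) (e l)) = 0 := by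
  rw [F_wedge_wedge]
  have hm : (Matrix.of fun a b => (![u, v, e k, e l] a) (![i, j, 3, 4] b))
      = Matrix.of ![![u i, u j, u 3, u 4], ![v i, v j, v 3, v 4],
          ![e k i, e k j, e k 3, e k 4], ![0,0,0,0]] := by
    ext a b
    fin_cases a <;> fin_cases b <;> simp [h1, h2, h3, h4]
  rw [hm, det4_eval]
  simp only [show (1 : Fin 4) = Fin.succ 0 from rfl, show (2 : Fin 4) = Fin.succ (Fin.succ 0) from rfl,
    show (3 : Fin 4) = Fin.succ (Fin.succ (Fin.succ 0)) from rfl, Matrix.cons_val_succ,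
    Matrix.cons_val_zero]
  ring

lemma mem_triple (x : ΛV) (hx : x ∈ N2) :
    ∃ a b c : ℂ, x = a • wedge (e 0) (e 1) + b • wedge (e 1) (e 2)
      + c • wedge (e 0) (e 2) := by
  rw [N2, Submodule.mem_span_insert] at hx
  obtain ⟨a, y, hy, rfl⟩ := hx
  rw [Submodule.mem_span_insert] at hy
  obtain ⟨b, z2, hz2, rfl⟩ := hy
  rw [Submodule.mem_span_singleton] at hz2
  obtain ⟨c, rfl⟩ := hz2
  exact ⟨a, b, c, by rw [add_assoc]⟩

lemma decomp (u v : V5) (h : u 3 * v 4 - u 4 * v 3 = 0) :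
    ∃ w z : V5, w 3 = 0 ∧ w 4 = 0 ∧ wedge w z = wedge u v ∧
      (z 3 ≠ 0 ∨ z 4 ≠ 0 ∨ (z 3 = 0 ∧ z 4 = 0)) := by
  by_cases hu4 : u 4 ≠ 0
  · refine ⟨u 4 • v - v 4 • u, (-(u 4))⁻¹ • u, ?_, ?_, ?_, ?_⟩
    · show u 4 * v 3 - v 4 * u 3 = 0; linear_combination -h
    · show u 4 * v 4 - v 4 * u 4 = 0; ring
    · rw [wedge_smul_right, wedge_sub_left, wedge_smul_left, wedge_smul_left,
        wedge_self, smul_zero, sub_zero, smul_smul, inv_neg, neg_mul,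
        inv_mul_cancel₀ hu4, wedge_anticomm u v, neg_smul, one_smul, neg_neg]
    · right; left; show (-(u 4))⁻¹ * u 4 ≠ 0; field_simp; norm_num
  push_neg at hu4
  by_cases hv4 : v 4 ≠ 0
  · refine ⟨v 4 • u - u 4 • v, (v 4)⁻¹ • v, ?_, ?_, ?_, ?_⟩
    · show v 4 * u 3 - u 4 * v 3 = 0; linear_combination h
    · show v 4 * u 4 - u 4 * v 4 = 0; ring
    · rw [wedge_smul_right, wedge_sub_left, wedge_smul_left, wedge_smul_left,
        wedge_self, smul_zero, sub_zero, smul_smul, inv_mul_cancel₀ hv4, one_smul]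
    · right; left; show (v 4)⁻¹ * v 4 ≠ 0; field_simp; norm_num
  push_neg at hv4
  by_cases hu3 : u 3 ≠ 0
  · refine ⟨u 3 • v - v 3 • u, (-(u 3))⁻¹ • u, ?_, ?_, ?_, ?_⟩
    · show u 3 * v 3 - v 3 * u 3 = 0; ring
    · show u 3 * v 4 - v 3 * u 4 = 0; rw [hu4, hv4]; ring
    · rw [wedge_smul_right, wedge_sub_left, wedge_smul_left, wedge_smul_left,
        wedge_self, smul_zero, sub_zero, smul_smul, inv_neg, neg_mul,
        inv_mul_cancel₀ hu3, wedge_anticomm u v, neg_smul, one_smul, neg_neg]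
    · left; show (-(u 3))⁻¹ * u 3 ≠ 0; field_simp; norm_num
  push_neg at hu3
  by_cases hv3 : v 3 ≠ 0
  · refine ⟨v 3 • u - u 3 • v, (v 3)⁻¹ • v, ?_, ?_, ?_, ?_⟩
    · show v 3 * u 3 - u 3 * v 3 = 0; ring
    · show v 3 * u 4 - u 3 * v 4 = 0; rw [hu4, hu3]; ring
    · rw [wedge_smul_right, wedge_sub_left, wedge_smul_left, wedge_smul_left,
        wedge_self, smul_zero, sub_zero, smul_smul, inv_mul_cancel₀ hv3, one_smul]
    · left; show (v 3)⁻¹ * v 3 ≠ 0; field_simp; norm_num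
  push_neg at hv3
  exact ⟨u, v, hu3, hu4, rfl, Or.inr (Or.inr ⟨hv3, hv4⟩)⟩

lemma third_index (i j : Fin 5) (hi : (i:ℕ) < 3) (hj : (j:ℕ) < 3) :
    ∃ k : Fin 5, (k:ℕ) < 3 ∧ k ≠ i ∧ k ≠ j := by
  fin_cases i <;> fin_cases j <;>
    first
      | (refine ⟨0, ?_, ?_, ?_⟩ <;> decide)
      | (refine ⟨1, ?_, ?_, ?_⟩ <;> decide)
      | (refine ⟨2, ?_, ?_, ?_⟩ <;> decide)
      | (exfalso; norm_num at hi hj)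

lemma lt3_ne (k : Fin 5) (hk : (k:ℕ) < 3) : k ≠ 3 ∧ k ≠ 4 := by
  constructor <;> (rintro rfl; revert hk; decide)

lemma exists_wi (w : V5) (hw3 : w 3 = 0) (hw4 : w 4 = 0) (hw : w ≠ 0) :
    ∃ i : Fin 5, (i:ℕ) < 3 ∧ w i ≠ 0 := by
  by_contra hcon
  push_neg at hcon
  apply hw
  funext k
  by_cases hk : (k:ℕ) < 3
  · exact hcon k hk
  · rcases eq_34 k hk with rfl | rfl
    · exact hw3
    · exact hw4

lemma exists_z' (w z : V5) (hw3 : w 3 = 0) (hw4 : w 4 = 0) (hne : wedge w z ≠ 0) :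
    ∃ z' : V5, z' 3 = 0 ∧ z' 4 = 0 ∧
      LinearIndependent ℂ ![wedge w z, wedge w z'] := by
  have hwne : w ≠ 0 := fun h => hne (by rw [h, wedge_zero_left])
  by_cases hz4 : z 4 ≠ 0
  · obtain ⟨i, hi3, hwi⟩ := exists_wi w hw3 hw4 hwne
    obtain ⟨j, hj3, hji⟩ : ∃ j : Fin 5, (j:ℕ) < 3 ∧ j ≠ i := by
      by_cases hi0 : i = 0
      · refine ⟨1, by norm_num, ?_⟩; rw [hi0]; decide
      · exact ⟨0, by norm_num, fun hh => hi0 hh.symm⟩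
    refine ⟨e j, e_apply_ne (Ne.symm (lt3_ne j hj3).1),
      e_apply_ne (Ne.symm (lt3_ne j hj3).2),
      indep_of_funcs _ _ (φ i 4) (φ i j) ?_⟩
    rw [φ_wedge, φ_wedge, φ_wedge, φ_wedge, hw4, e_apply_self,
      e_apply_ne (Ne.symm hji), e_apply_ne (Ne.symm (lt3_ne j hj3).2)]
    intro hEq
    exact mul_ne_zero (mul_ne_zero hwi hz4) hwi (by linear_combination hEq)
  push_neg at hz4
  by_cases hz3 : z 3 ≠ 0
  · obtain ⟨i, hi3, hwi⟩ := exists_wi w hw3 hw4 hwne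
    obtain ⟨j, hj3, hji⟩ : ∃ j : Fin 5, (j:ℕ) < 3 ∧ j ≠ i := by
      by_cases hi0 : i = 0
      · refine ⟨1, by norm_num, ?_⟩; rw [hi0]; decide
      · exact ⟨0, by norm_num, fun hh => hi0 hh.symm⟩
    refine ⟨e j, e_apply_ne (Ne.symm (lt3_ne j hj3).1),
      e_apply_ne (Ne.symm (lt3_ne j hj3).2),
      indep_of_funcs _ _ (φ i 3) (φ i j) ?_⟩
    rw [φ_wedge, φ_wedge, φ_wedge, φ_wedge, hw3, e_apply_self,
      e_apply_ne (Ne.symm hji), e_apply_ne (Ne.symm (lt3_ne j hj3).1)]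
    intro hEq
    exact mul_ne_zero (mul_ne_zero hwi hz3) hwi (by linear_combination hEq)
  push_neg at hz3
  obtain ⟨i0, j0, hm⟩ : ∃ i j, w i * z j ≠ w j * z i := by
    by_contra hcon
    push_neg at hcon
    exact hne (wedge_eq_zero_of_minors w z hcon)
  have hi3 : (i0:ℕ) < 3 := by
    by_contra hbad
    rcases eq_34 i0 hbad with rfl | rfl
    · exact hm (by rw [hw3, hz3]; ring)
    · exact hm (by rw [hw4, hz4]; ring)
  have hj3 : (j0:ℕ) < 3 := by
    by_contra hbad
    rcases eq_34 j0 hbad with rfl | rfl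
    · exact hm (by rw [hw3, hz3]; ring)
    · exact hm (by rw [hw4, hz4]; ring)
  have hij : i0 ≠ j0 := by rintro rfl; exact hm rfl
  obtain ⟨k, hk3, hki, hkj⟩ := third_index i0 j0 hi3 hj3
  obtain ⟨l, hwl, hlk⟩ : ∃ l : Fin 5, w l ≠ 0 ∧ l ≠ k := by
    by_cases hwi : w i0 = 0
    · refine ⟨j0, fun hwj => hm ?_, Ne.symm hkj⟩
      rw [hwi, hwj]; ring
    · exact ⟨i0, hwi, Ne.symm hki⟩
  refine ⟨e k, e_apply_ne (Ne.symm (lt3_ne k hk3).1),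
    e_apply_ne (Ne.symm (lt3_ne k hk3).2),
    indep_of_funcs _ _ (φ i0 j0) (φ l k) ?_⟩
  rw [φ_wedge, φ_wedge, φ_wedge, φ_wedge, e_apply_self,
    e_apply_ne (Ne.symm hki), e_apply_ne (Ne.symm hkj), e_apply_ne hlk]
  intro hEq
  exact mul_ne_zero (sub_ne_zero.mpr hm) hwl (by linear_combination hEq)

lemma range_pair (x y : ΛV) : Set.range ![x, y] = {x, y} := by
  ext t
  constructor
  · rintro ⟨i, rfl⟩
    fin_cases i
    · exact Set.mem_insert _ _
    · exact Set.mem_insert_of_mem _ rfl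
  · rintro (rfl | rfl)
    · exact ⟨0, rfl⟩
    · exact ⟨1, rfl⟩

lemma smul_wedge_mul_smul_wedge (c d : ℂ) (x y : ΛV) :
    (c • x) * (d • y) = (c * d) • (x * y) := by
  rw [smul_mul_assoc, mul_smul_comm, smul_smul]


/-- the locus swept out by the lines contained in the
Plücker-embedded `G(2,5) ⊆ ℙ⁹` which pass through a point of `N₂` is exactly the
hyperplane section `{x₄₅ = 0} ∩ G(2,5)`. -/
theorem stmt16 :
    {P : Projectivization ℂ ΛV | P ∈ G25 ∧ ∃ W : Submodule ℂ ΛV,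
        Module.finrank ℂ W = 2 ∧ projSet W ⊆ G25 ∧ P ∈ projSet W ∧
        ∃ q ∈ projSet W, q ∈ projSet N2} =
      {P : Projectivization ℂ ΛV | P ∈ G25 ∧ P.rep ∈ W45} := by
  ext P
  simp only [Set.mem_setOf_eq]
  constructor
  · rintro ⟨hG, Wl, _hdim, hWG, hPW, q, hqW, hqN⟩
    refine ⟨hG, ?_⟩
    obtain ⟨u, v, huv, hPmk⟩ := hG
    obtain ⟨cP, hcP, hrepP⟩ : ∃ c : ℂ, c ≠ 0 ∧ P.rep = c • wedge u v := by
      rw [hPmk]; exact rep_mk_scalar _ huv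
    have hq0 : q.rep ≠ 0 := q.rep_nonzero
    by_cases hdep : ∃ c : ℂ, P.rep = c • q.rep
    · obtain ⟨c, hc⟩ := hdep
      rw [hc]
      exact N2_le_W45 (Submodule.smul_mem _ _ hqN)
    · -- independent case
      have hsum_ne : P.rep + q.rep ≠ 0 := by
        intro h
        exact hdep ⟨-1, by rw [neg_one_smul]; exact eq_neg_of_add_eq_zero_left h⟩
      have hsumW : P.rep + q.rep ∈ Wl := Submodule.add_mem _ hPW hqW
      have hmkW : Projectivization.mk ℂ (P.rep + q.rep) hsum_ne ∈ projSet Wl := by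
        show (Projectivization.mk ℂ (P.rep + q.rep) hsum_ne).rep ∈ Wl
        obtain ⟨c, hc, hr⟩ := rep_mk_scalar _ hsum_ne
        rw [hr]
        exact Submodule.smul_mem _ _ hsumW
      obtain ⟨a2, b2, hab2, hmk2⟩ := hWG hmkW
      obtain ⟨a3, b3, hab3, hmk3⟩ := hWG hqW
      -- squares vanish
      have hsq_sum : (P.rep + q.rep) * (P.rep + q.rep) = 0 := by
        have h1 : Projectivization.mk ℂ (P.rep + q.rep) hsum_ne
            = Projectivization.mk ℂ (wedge a2 b2) hab2 := hmk2
        rw [Projectivization.mk_eq_mk_iff] at h1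
        obtain ⟨un, hun⟩ := h1
        rw [← hun, Units.smul_def, smul_wedge_mul_smul_wedge, wedge_sq, smul_zero]
      have hsq_q : q.rep * q.rep = 0 := by
        have h1 : Projectivization.mk ℂ q.rep hq0 = Projectivization.mk ℂ (wedge a3 b3) hab3 := by
          rw [Projectivization.mk_rep]; exact hmk3
        rw [Projectivization.mk_eq_mk_iff] at h1
        obtain ⟨un, hun⟩ := h1
        rw [← hun, Units.smul_def, smul_wedge_mul_smul_wedge, wedge_sq, smul_zero]
      have hsq_p : P.rep * P.rep = 0 := by
        rw [hrepP, smul_wedge_mul_smul_wedge, wedge_sq, smul_zero]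
      -- q.rep as combination
      obtain ⟨a, b, c, hq0expr⟩ := mem_triple q.rep hqN
      have hcomm : q.rep * P.rep = P.rep * q.rep := by
        obtain ⟨cq, hcq, hq⟩ : ∃ cc : ℂ, cc ≠ 0 ∧ q.rep = cc • wedge a3 b3 := by
          have h1 : Projectivization.mk ℂ q.rep hq0
              = Projectivization.mk ℂ (wedge a3 b3) hab3 := by
            rw [Projectivization.mk_rep]; exact hmk3
          rw [Projectivization.mk_eq_mk_iff] at h1
          obtain ⟨un, hun⟩ := h1
          exact ⟨(un : ℂ), un.ne_zero, by rw [← hun, Units.smul_def]⟩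
        rw [hq, hrepP, smul_wedge_mul_smul_wedge, smul_wedge_mul_smul_wedge,
          wedge_mul_comm, mul_comm]
      have hpq : P.rep * q.rep = 0 := by
        have hh : P.rep * q.rep + P.rep * q.rep = 0 := by
          have := hsq_sum
          rw [mul_add, add_mul, add_mul, hsq_p, hsq_q, zero_add, add_zero, hcomm] at this
          exact this
        have h2 : (2:ℂ) • (P.rep * q.rep) = 0 := by
          rw [two_smul]; exact hh
        rcases smul_eq_zero.mp h2 with h | h
        · exact absurd h two_ne_zero
        · exact h
      have huvq : wedge u v * q.rep = 0 := by
        have : P.rep * q.rep = cP • (wedge u v * q.rep) := by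
          rw [hrepP, smul_mul_assoc]
        rw [this] at hpq
        rcases smul_eq_zero.mp hpq with h | h
        · exact absurd h hcP
        · exact h
      -- not all coefficients vanish
      have habc : ¬(a = 0 ∧ b = 0 ∧ c = 0) := by
        rintro ⟨rfl, rfl, rfl⟩
        apply hq0
        rw [hq0expr]
        simp
      -- extract the three relations
      set X : ℂ := u 3 * v 4 - u 4 * v 3 with hX
      have hF : ∀ i j : Fin 5, F i j (wedge u v * q.rep) = 0 := by
        intro i j
        rw [huvq, map_zero]
      have expand : ∀ i j : Fin 5, F i j (wedge u v * q.rep)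
          = a * F i j (wedge u v * wedge (e 0) (e 1))
            + b * F i j (wedge u v * wedge (e 1) (e 2))
            + c * F i j (wedge u v * wedge (e 0) (e 2)) := by
        intro i j
        rw [hq0expr, mul_add, mul_add, mul_smul_comm, mul_smul_comm, mul_smul_comm,
          map_add, map_add, map_smul, map_smul, map_smul, smul_eq_mul, smul_eq_mul,
          smul_eq_mul]
      have hrel1 : a * X = 0 := by
        have h0 := hF 0 1
        rw [expand 0 1] at h0
        rw [F_diag 0 1 u v (by decide) (by decide) (by decide) (by decide) (by decide),
          F_off_right 0 1 1 2 u v (e_apply_ne (by decide)) (e_apply_ne (by decide))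
            (e_apply_ne (by decide)) (e_apply_ne (by decide)),
          F_off_right 0 1 0 2 u v (e_apply_ne (by decide)) (e_apply_ne (by decide))
            (e_apply_ne (by decide)) (e_apply_ne (by decide))] at h0
        rw [hX]
        linear_combination h0
      have hrel2 : b * X = 0 := by
        have h0 := hF 1 2
        rw [expand 1 2] at h0
        rw [F_diag 1 2 u v (by decide) (by decide) (by decide) (by decide) (by decide),
          F_off_left 1 2 0 1 u v (e_apply_ne (by decide)) (e_apply_ne (by decide))
            (e_apply_ne (by decide)) (e_apply_ne (by decide)),
          F_off_left 1 2 0 2 u v (e_apply_ne (by decide)) (e_apply_ne (by decide))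
            (e_apply_ne (by decide)) (e_apply_ne (by decide))] at h0
        rw [hX]
        linear_combination h0
      have hrel3 : c * X = 0 := by
        have h0 := hF 0 2
        rw [expand 0 2] at h0
        rw [F_diag 0 2 u v (by decide) (by decide) (by decide) (by decide) (by decide),
          F_off_right 0 2 0 1 u v (e_apply_ne (by decide)) (e_apply_ne (by decide))
            (e_apply_ne (by decide)) (e_apply_ne (by decide)),
          F_off_left 0 2 1 2 u v (e_apply_ne (by decide)) (e_apply_ne (by decide))
            (e_apply_ne (by decide)) (e_apply_ne (by decide))] at h0
        rw [hX]
        linear_combination h0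
      have hXz : X = 0 := by
        by_contra hXne
        exact habc ⟨by
            rcases mul_eq_zero.mp hrel1 with h | h
            · exact h
            · exact absurd h hXne,
          by
            rcases mul_eq_zero.mp hrel2 with h | h
            · exact h
            · exact absurd h hXne,
          by
            rcases mul_eq_zero.mp hrel3 with h | h
            · exact h
            · exact absurd h hXne⟩
      rw [hrepP]
      exact Submodule.smul_mem _ _ (mem_W45 u v hXz)
  · rintro ⟨hG, h45⟩
    refine ⟨hG, ?_⟩
    obtain ⟨u, v, huv, hPmk⟩ := hG
    obtain ⟨cP, hcP, hrepP⟩ : ∃ c : ℂ, c ≠ 0 ∧ P.rep = c • wedge u v := by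
      rw [hPmk]; exact rep_mk_scalar _ huv
    have hX : u 3 * v 4 - u 4 * v 3 = 0 := by
      have h0 : φ 3 4 P.rep = 0 := W45_le_ker h45
      rw [hrepP, map_smul, smul_eq_mul, φ_wedge] at h0
      rcases mul_eq_zero.mp h0 with h | h
      · exact absurd h hcP
      · exact h
    obtain ⟨w, z, hw3, hw4, hwz, _⟩ := decomp u v hX
    have hne : wedge w z ≠ 0 := by rw [hwz]; exact huv
    obtain ⟨z', hz'3, hz'4, hind⟩ := exists_z' w z hw3 hw4 hne
    have hy_ne : wedge w z' ≠ 0 := by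
      have := hind.ne_zero 1
      simpa using this
    refine ⟨Submodule.span ℂ {wedge w z, wedge w z'}, ?_, ?_, ?_, ?_⟩
    · have h1 := finrank_span_eq_card (R := ℂ) (M := ΛV) hind
      rw [range_pair] at h1
      rw [h1]
      simp
    · intro P' hP'
      have hr : P'.rep ∈ Submodule.span ℂ {wedge w z, wedge w z'} := hP'
      rw [Submodule.mem_span_pair] at hr
      obtain ⟨a, b, hab⟩ := hr
      have hr' : P'.rep = wedge w (a • z + b • z') := by
        rw [wedge_add_right, wedge_smul_right, wedge_smul_right, ← hab]
      refine ⟨w, a • z + b • z', hr' ▸ P'.rep_nonzero, ?_⟩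
      conv_lhs => rw [← Projectivization.mk_rep P']
      rw [Projectivization.mk_eq_mk_iff]
      exact ⟨1, by rw [one_smul, hr']⟩
    · show P.rep ∈ Submodule.span ℂ {wedge w z, wedge w z'}
      rw [hrepP, ← hwz]
      exact Submodule.smul_mem _ _ (Submodule.subset_span (Set.mem_insert _ _))
    · refine ⟨Projectivization.mk ℂ (wedge w z') hy_ne, ?_, ?_⟩
      · show (Projectivization.mk ℂ (wedge w z') hy_ne).rep
            ∈ Submodule.span ℂ {wedge w z, wedge w z'}
        obtain ⟨c, hc, hr⟩ := rep_mk_scalar _ hy_ne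
        rw [hr]
        exact Submodule.smul_mem _ _
          (Submodule.subset_span (Set.mem_insert_of_mem _ rfl))
      · show (Projectivization.mk ℂ (wedge w z') hy_ne).rep ∈ N2
        obtain ⟨c, hc, hr⟩ := rep_mk_scalar _ hy_ne
        rw [hr]
        exact Submodule.smul_mem _ _ (mem_N2 w z' hw3 hw4 hz'3 hz'4)
end
end
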